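/- There exists an absolute constant C > 0 such that for every real R ≥ 1, every η ∈ (0,1), every sign s ∈ {+1, −1}, and every nonzero real r, one has |h_{R+sη}(r)·h_η(r)/(π(sinh(2η) − 2η))| ≤ C·R·e^R / ((1+|r|)²·(1+η|r|)²). -/

import Mathlib

open MeasureTheory

/-- The Selberg transform of the indicator of a hyperbolic ball of radius `ρ` in `ℍ³`,
as a function of a real spectral parameter `r`. -/
noncomputable def hSel (ρ r : ℝ) : ℝ :=
  (4 * Real.pi / r) * ∫ u in (0:ℝ)..ρ, Real.sin (r * u) * Real.sinh u

/-- The smoothed Selberg transform `h_± = h_{R+sη} · h_η / μ(B_η)`,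
where `μ(B_η) = π(sinh(2η) − 2η)`. -/
noncomputable def hPM (R η s r : ℝ) : ℝ :=
  hSel (R + s * η) r * hSel η r / (Real.pi * (Real.sinh (2 * η) - 2 * η))

section Aux

open Real intervalIntegral

lemma integral_sin_sinh (r ρ : ℝ) :
    ∫ u in (0:ℝ)..ρ, Real.sin (r * u) * Real.sinh u
      = (Real.sin (r * ρ) * Real.cosh ρ - r * Real.cos (r * ρ) * Real.sinh ρ) / (1 + r ^ 2) := by
  have h1r : (1 : ℝ) + r ^ 2 ≠ 0 := by positivity
  have key : ∀ u ∈ Set.uIcc (0:ℝ) ρ,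
      HasDerivAt (fun u => (Real.sin (r * u) * Real.cosh u
          - r * (Real.cos (r * u) * Real.sinh u)) / (1 + r ^ 2))
        (Real.sin (r * u) * Real.sinh u) u := by
    intro u _
    have hru : HasDerivAt (fun u : ℝ => r * u) r u := by
      simpa using (hasDerivAt_id u).const_mul r
    have hs : HasDerivAt (fun u : ℝ => Real.sin (r * u)) (Real.cos (r * u) * r) u := hru.sin
    have hc : HasDerivAt (fun u : ℝ => Real.cos (r * u)) (-Real.sin (r * u) * r) u := hru.cos
    have h1 : HasDerivAt (fun u : ℝ => Real.sin (r * u) * Real.cosh u)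
        (Real.cos (r * u) * r * Real.cosh u + Real.sin (r * u) * Real.sinh u) u :=
      hs.mul (Real.hasDerivAt_cosh u)
    have h2 : HasDerivAt (fun u : ℝ => Real.cos (r * u) * Real.sinh u)
        (-Real.sin (r * u) * r * Real.sinh u + Real.cos (r * u) * Real.cosh u) u :=
      hc.mul (Real.hasDerivAt_sinh u)
    have h3 := ((h1.sub (h2.const_mul r)).div_const (1 + r ^ 2))
    refine h3.congr_deriv ?_
    rw [div_eq_iff h1r]
    ring
  rw [intervalIntegral.integral_eq_sub_of_hasDerivAt key
    (Continuous.intervalIntegrable (by continuity) _ _)]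
  simp
  ring

lemma hSel_eq (ρ r : ℝ) (hr : r ≠ 0) :
    hSel ρ r = 4 * Real.pi * (Real.sin (r * ρ) * Real.cosh ρ
      - r * Real.cos (r * ρ) * Real.sinh ρ) / (r * (1 + r ^ 2)) := by
  rw [hSel, integral_sin_sinh]
  field_simp

lemma sinh_le_mul_cosh_one {x : ℝ} (hx : 0 ≤ x) (hx1 : x ≤ 1) :
    Real.sinh x ≤ x * Real.cosh 1 := by
  have h : Real.sinh x - Real.sinh 0 = ∫ t in (0:ℝ)..x, Real.cosh t := by
    rw [intervalIntegral.integral_eq_sub_of_hasDerivAt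
      (fun t _ => Real.hasDerivAt_sinh t)
      (Continuous.intervalIntegrable Real.continuous_cosh _ _)]
  have hmono : ∫ t in (0:ℝ)..x, Real.cosh t ≤ ∫ t in (0:ℝ)..x, Real.cosh 1 := by
    apply intervalIntegral.integral_mono_on hx
      (Continuous.intervalIntegrable Real.continuous_cosh _ _)
      (intervalIntegrable_const)
    intro t ht
    rw [Real.cosh_le_cosh]
    rw [abs_of_nonneg ht.1, abs_one]
    exact ht.2.trans hx1
  have h2 := h.le.trans hmono
  simp only [Real.sinh_zero, sub_zero, intervalIntegral.integral_const, smul_eq_mul] at h2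
  linarith

lemma one_add_sq_div_two_le_cosh {x : ℝ} (hx : 0 ≤ x) : 1 + x ^ 2 / 2 ≤ Real.cosh x := by
  have h : Real.cosh x - Real.cosh 0 = ∫ t in (0:ℝ)..x, Real.sinh t := by
    rw [intervalIntegral.integral_eq_sub_of_hasDerivAt
      (fun t _ => Real.hasDerivAt_cosh t)
      (Continuous.intervalIntegrable Real.continuous_sinh _ _)]
  have hmono : ∫ t in (0:ℝ)..x, t ≤ ∫ t in (0:ℝ)..x, Real.sinh t := by
    apply intervalIntegral.integral_mono_on hx
      (Continuous.intervalIntegrable continuous_id _ _)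
      (Continuous.intervalIntegrable Real.continuous_sinh _ _)
    intro t ht
    exact Real.self_le_sinh_iff.mpr ht.1
  rw [integral_id] at hmono
  rw [Real.cosh_zero] at h
  nlinarith [h.symm.le.trans' hmono]

lemma self_add_cube_le_sinh {x : ℝ} (hx : 0 ≤ x) : x + x ^ 3 / 6 ≤ Real.sinh x := by
  have h : Real.sinh x - Real.sinh 0 = ∫ t in (0:ℝ)..x, Real.cosh t := by
    rw [intervalIntegral.integral_eq_sub_of_hasDerivAt
      (fun t _ => Real.hasDerivAt_sinh t)
      (Continuous.intervalIntegrable Real.continuous_cosh _ _)]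
  have hmono : ∫ t in (0:ℝ)..x, (1 + t ^ 2 / 2) ≤ ∫ t in (0:ℝ)..x, Real.cosh t := by
    apply intervalIntegral.integral_mono_on hx
      (Continuous.intervalIntegrable (by continuity) _ _)
      (Continuous.intervalIntegrable Real.continuous_cosh _ _)
    intro t ht
    exact one_add_sq_div_two_le_cosh ht.1
  have hval : ∫ t in (0:ℝ)..x, (1 + t ^ 2 / 2) = x + x ^ 3 / 6 := by
    have : ∫ t in (0:ℝ)..x, (1 + t ^ 2 / 2)
        = (∫ t in (0:ℝ)..x, (1:ℝ)) + ∫ t in (0:ℝ)..x, t ^ 2 / 2 := by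
      apply intervalIntegral.integral_add intervalIntegrable_const
        (Continuous.intervalIntegrable (by continuity) _ _)
    rw [this, intervalIntegral.integral_div, integral_pow]
    simp
    ring
  rw [hval] at hmono
  simp only [Real.sinh_zero, sub_zero] at h
  linarith [h.symm.le.trans' hmono]

lemma cosh_le_exp_self {x : ℝ} (hx : 0 ≤ x) : Real.cosh x ≤ Real.exp x := by
  rw [Real.cosh_eq]
  have : Real.exp (-x) ≤ Real.exp x := Real.exp_le_exp.mpr (by linarith)
  linarith

/-- Bound on the big factor. -/
lemma bound_big {R η s r : ℝ} (hR : 1 ≤ R) (hη0 : 0 < η) (hη1 : η < 1)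
    (hs : s = 1 ∨ s = -1) (hr : r ≠ 0) :
    |hSel (R + s * η) r|
      ≤ 24 * Real.pi * Real.exp 1 * R * Real.exp R / (1 + |r|) ^ 2 := by
  set ρ := R + s * η with hρ
  have hρ0 : 0 < ρ := by rcases hs with h | h <;> simp [hρ, h] <;> linarith
  have hρle : ρ ≤ R + 1 := by rcases hs with h | h <;> simp [hρ, h] <;> linarith
  have hrpos : 0 < |r| := abs_pos.mpr hr
  have h1r : (0:ℝ) < 1 + r ^ 2 := by positivity
  -- numerator bound
  have hN : |Real.sin (r * ρ) * Real.cosh ρ - r * Real.cos (r * ρ) * Real.sinh ρ|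
      ≤ |r| * (ρ * Real.cosh ρ + Real.sinh ρ) := by
    have hsin : |Real.sin (r * ρ)| ≤ |r| * ρ := by
      have := Real.abs_sin_le_abs (x := r * ρ)
      rwa [abs_mul, abs_of_pos hρ0] at this
    have hcos : |Real.cos (r * ρ)| ≤ 1 := Real.abs_cos_le_one _
    have hcoshpos : (0:ℝ) < Real.cosh ρ := Real.cosh_pos ρ
    have hsinhpos : (0:ℝ) ≤ Real.sinh ρ := Real.sinh_nonneg_iff.mpr hρ0.le
    calc |Real.sin (r * ρ) * Real.cosh ρ - r * Real.cos (r * ρ) * Real.sinh ρ|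
        ≤ |Real.sin (r * ρ) * Real.cosh ρ| + |r * Real.cos (r * ρ) * Real.sinh ρ| :=
          abs_sub _ _
      _ ≤ (|r| * ρ) * Real.cosh ρ + |r| * 1 * Real.sinh ρ := by
          rw [abs_mul, abs_mul, abs_mul, abs_of_pos hcoshpos, abs_of_nonneg hsinhpos]
          gcongr
      _ = |r| * (ρ * Real.cosh ρ + Real.sinh ρ) := by ring
  have hmain : |hSel ρ r| ≤ 4 * Real.pi * (ρ * Real.cosh ρ + Real.sinh ρ) / (1 + r ^ 2) := by
    have hd : |r * (1 + r ^ 2)| = |r| * (1 + r ^ 2) := by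
      rw [abs_mul, abs_of_pos h1r]
    have hn : |4 * Real.pi * (Real.sin (r * ρ) * Real.cosh ρ
        - r * Real.cos (r * ρ) * Real.sinh ρ)|
        = 4 * Real.pi * |Real.sin (r * ρ) * Real.cosh ρ
          - r * Real.cos (r * ρ) * Real.sinh ρ| := by
      rw [abs_mul, abs_of_nonneg (by positivity : (0:ℝ) ≤ 4 * Real.pi)]
    rw [hSel_eq _ _ hr, abs_div, hn, hd]
    rw [div_le_div_iff₀ (by positivity) (by positivity)]
    nlinarith [mul_le_mul_of_nonneg_left hN
      (by positivity : (0:ℝ) ≤ 4 * Real.pi * (1 + r ^ 2)), Real.pi_pos]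
  -- bound the ρ-dependent part
  have hX : ρ * Real.cosh ρ + Real.sinh ρ ≤ 3 * R * Real.exp 1 * Real.exp R := by
    have hce : Real.cosh ρ ≤ Real.exp ρ := cosh_le_exp_self hρ0.le
    have hse : Real.sinh ρ ≤ Real.exp ρ := by
      rw [Real.sinh_eq]
      have h1 : (0:ℝ) < Real.exp (-ρ) := Real.exp_pos _
      have h2 : (0:ℝ) < Real.exp ρ := Real.exp_pos _
      linarith
    have hee : Real.exp ρ ≤ Real.exp 1 * Real.exp R := by
      rw [← Real.exp_add]
      exact Real.exp_le_exp.mpr (by linarith)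
    have hexpos : (0:ℝ) < Real.exp ρ := Real.exp_pos _
    calc ρ * Real.cosh ρ + Real.sinh ρ ≤ ρ * Real.exp ρ + Real.exp ρ := by
          have := mul_le_mul_of_nonneg_left hce hρ0.le
          linarith
      _ = (ρ + 1) * Real.exp ρ := by ring
      _ ≤ (R + 2) * (Real.exp 1 * Real.exp R) := by
          apply mul_le_mul (by linarith) hee hexpos.le (by linarith)
      _ ≤ 3 * R * Real.exp 1 * Real.exp R := by
          have h1 : (0:ℝ) < Real.exp 1 * Real.exp R := by positivity
          nlinarith
  have hden : (1 + |r|) ^ 2 ≤ 2 * (1 + r ^ 2) := by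
    nlinarith [sq_abs r, abs_nonneg r, sq_nonneg (1 - |r|)]
  refine hmain.trans ?_
  rw [div_le_div_iff₀ h1r (by positivity)]
  have hsq : (0:ℝ) ≤ (1 + |r|) ^ 2 := by positivity
  have hR0 : (0:ℝ) < R := lt_of_lt_of_le one_pos hR
  have hXb : (0:ℝ) ≤ 3 * R * Real.exp 1 * Real.exp R := by positivity
  have hkey := mul_le_mul hX hden hsq hXb
  nlinarith [hkey, Real.pi_pos]

/-- Bound on the small (mollifier) factor. -/
lemma bound_small {η r : ℝ} (hη0 : 0 < η) (hη1 : η < 1) (hr : r ≠ 0) :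
    |hSel η r| ≤ 32 * Real.pi * Real.cosh 1 * η ^ 3 / (1 + η * |r|) ^ 2 := by
  have hrpos : 0 < |r| := abs_pos.mpr hr
  have ht0 : 0 < η * |r| := by positivity
  have hc1 : (0:ℝ) < Real.cosh 1 := Real.cosh_pos 1
  have hπ := Real.pi_pos
  rcases le_or_gt (η * |r|) 1 with hcase | hcase
  · -- small η|r| : direct integral estimate
    have hint : |∫ u in (0:ℝ)..η, Real.sin (r * u) * Real.sinh u|
        ≤ |r| * Real.cosh 1 * η ^ 3 / 3 := by
      have hb : ‖∫ u in (0:ℝ)..η, Real.sin (r * u) * Real.sinh u‖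
          ≤ |∫ u in (0:ℝ)..η, |r| * Real.cosh 1 * u ^ 2| := by
        apply intervalIntegral.norm_integral_le_abs_of_norm_le
        · rw [Set.uIoc_of_le hη0.le]
          refine (ae_restrict_iff' measurableSet_Ioc).2 (Filter.Eventually.of_forall ?_)
          intro u hu
          have hu0 : 0 < u := hu.1
          have hu1 : u ≤ 1 := hu.2.trans hη1.le
          have hsin : |Real.sin (r * u)| ≤ |r| * u := by
            have := Real.abs_sin_le_abs (x := r * u)
            rwa [abs_mul, abs_of_pos hu0] at this
          have hsinh : |Real.sinh u| ≤ u * Real.cosh 1 := by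
            rw [abs_of_nonneg (Real.sinh_nonneg_iff.mpr hu0.le)]
            exact sinh_le_mul_cosh_one hu0.le hu1
          calc ‖Real.sin (r * u) * Real.sinh u‖
              = |Real.sin (r * u)| * |Real.sinh u| := abs_mul _ _
            _ ≤ (|r| * u) * (u * Real.cosh 1) :=
                mul_le_mul hsin hsinh (abs_nonneg _) (by positivity)
            _ = |r| * Real.cosh 1 * u ^ 2 := by ring
        · exact Continuous.intervalIntegrable (by continuity) _ _
      have hval : ∫ u in (0:ℝ)..η, |r| * Real.cosh 1 * u ^ 2
          = |r| * Real.cosh 1 * η ^ 3 / 3 := by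
        rw [intervalIntegral.integral_const_mul, integral_pow]
        norm_num
        ring
      rw [hval] at hb
      calc |∫ u in (0:ℝ)..η, Real.sin (r * u) * Real.sinh u|
          ≤ abs (|r| * Real.cosh 1 * η ^ 3 / 3) := hb
        _ = |r| * Real.cosh 1 * η ^ 3 / 3 := abs_of_nonneg (by positivity)
    have h1 : |hSel η r| ≤ 4 * Real.pi * Real.cosh 1 * η ^ 3 / 3 := by
      rw [hSel, abs_mul, abs_div, abs_of_nonneg (by positivity : (0:ℝ) ≤ 4 * Real.pi)]
      rw [div_mul_eq_mul_div, div_le_iff₀ hrpos]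
      calc 4 * Real.pi * |∫ u in (0:ℝ)..η, Real.sin (r * u) * Real.sinh u|
          ≤ 4 * Real.pi * (|r| * Real.cosh 1 * η ^ 3 / 3) := by
            gcongr
        _ = 4 * Real.pi * Real.cosh 1 * η ^ 3 / 3 * |r| := by ring
    refine h1.trans ?_
    rw [div_le_div_iff₀ (by norm_num) (by positivity)]
    have h4 : (1 + η * |r|) ^ 2 ≤ 4 := by nlinarith
    have hP : (0:ℝ) ≤ Real.pi * Real.cosh 1 * η ^ 3 := by positivity
    nlinarith [mul_le_mul_of_nonneg_left h4 hP]
  · -- large η|r| : use the closed form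
    have h1r : (0:ℝ) < 1 + r ^ 2 := by positivity
    have hN : |Real.sin (r * η) * Real.cosh η - r * Real.cos (r * η) * Real.sinh η|
        ≤ Real.cosh 1 * (1 + η * |r|) := by
      have hcoshη : Real.cosh η ≤ Real.cosh 1 := by
        rw [Real.cosh_le_cosh, abs_of_pos hη0, abs_one]; exact hη1.le
      have hsinhη : Real.sinh η ≤ η * Real.cosh 1 := sinh_le_mul_cosh_one hη0.le hη1.le
      have hsinhη0 : 0 ≤ Real.sinh η := Real.sinh_nonneg_iff.mpr hη0.le
      calc |Real.sin (r * η) * Real.cosh η - r * Real.cos (r * η) * Real.sinh η|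
          ≤ |Real.sin (r * η) * Real.cosh η| + |r * Real.cos (r * η) * Real.sinh η| :=
            abs_sub _ _
        _ ≤ 1 * Real.cosh η + |r| * 1 * Real.sinh η := by
            rw [abs_mul, abs_mul, abs_mul, abs_of_pos (Real.cosh_pos _),
              abs_of_nonneg hsinhη0]
            gcongr <;> [exact Real.abs_sin_le_one _; exact Real.abs_cos_le_one _]
        _ ≤ 1 * Real.cosh 1 + |r| * 1 * (η * Real.cosh 1) := by gcongr
        _ = Real.cosh 1 * (1 + η * |r|) := by ring
    have h1 : |hSel η r| ≤ 4 * Real.pi * Real.cosh 1 * (1 + η * |r|) / |r| ^ 3 := by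
      have hd : |r * (1 + r ^ 2)| = |r| * (1 + r ^ 2) := by
        rw [abs_mul, abs_of_pos h1r]
      have hn : |4 * Real.pi * (Real.sin (r * η) * Real.cosh η
          - r * Real.cos (r * η) * Real.sinh η)|
          = 4 * Real.pi * |Real.sin (r * η) * Real.cosh η
            - r * Real.cos (r * η) * Real.sinh η| := by
        rw [abs_mul, abs_of_nonneg (by positivity : (0:ℝ) ≤ 4 * Real.pi)]
      rw [hSel_eq _ _ hr, abs_div, hn, hd]
      have hden : |r| ^ 3 ≤ |r| * (1 + r ^ 2) := by
        nlinarith [sq_abs r, hrpos]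
      rw [div_le_div_iff₀ (by positivity) (by positivity)]
      have hNpos : (0:ℝ) ≤ Real.cosh 1 * (1 + η * |r|) := by positivity
      nlinarith [mul_le_mul (mul_le_mul_of_nonneg_left hN
        (by positivity : (0:ℝ) ≤ 4 * Real.pi)) hden (by positivity) (by positivity :
          (0:ℝ) ≤ 4 * Real.pi * (Real.cosh 1 * (1 + η * |r|)))]
    refine h1.trans ?_
    rw [div_le_div_iff₀ (by positivity) (by positivity)]
    -- reduces to (1+t)^3 ≤ 8 t^3 with t = η |r| ≥ 1
    have ht : (1:ℝ) ≤ η * |r| := hcase.le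
    have hkey : (1 + η * |r|) ^ 3 ≤ 8 * (η * |r|) ^ 3 := by
      nlinarith [mul_nonneg (sub_nonneg.2 ht) (sq_nonneg (η * |r| - 1)), sq_nonneg (η * |r| - 1)]
    have hpow : (η * |r|) ^ 3 = η ^ 3 * |r| ^ 3 := by ring
    nlinarith [mul_pos hπ hc1, mul_le_mul_of_nonneg_left hkey
      (by positivity : (0:ℝ) ≤ 4 * Real.pi * Real.cosh 1), pow_pos hrpos 3,
      pow_pos hη0 3]

end Aux

/-- Uniform bound `|h_±(r)| ≤ C R e^R / ((1+|r|)² (1+η|r|)²)` for `R ≥ 1`, `η ∈ (0,1)`,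
sign `s = ±1`, and nonzero real `r`. -/
theorem hPM_decay_bound :
    ∃ C : ℝ, 0 < C ∧ ∀ R : ℝ, 1 ≤ R → ∀ η : ℝ, 0 < η → η < 1 →
      ∀ s : ℝ, (s = 1 ∨ s = -1) → ∀ r : ℝ, r ≠ 0 →
        |hPM R η s r|
          ≤ C * R * Real.exp R / ((1 + |r|) ^ 2 * (1 + η * |r|) ^ 2) := by
  refine ⟨576 * Real.pi * Real.exp 1 * Real.cosh 1, by positivity, ?_⟩
  intro R hR η hη0 hη1 s hs r hr
  have hπ := Real.pi_pos
  have hrpos : 0 < |r| := abs_pos.mpr hr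
  have hDlow : 4 * Real.pi / 3 * η ^ 3 ≤ Real.pi * (Real.sinh (2 * η) - 2 * η) := by
    have := self_add_cube_le_sinh (x := 2 * η) (by linarith)
    nlinarith
  have hDpos : 0 < Real.pi * (Real.sinh (2 * η) - 2 * η) := by
    have : (0:ℝ) < 4 * Real.pi / 3 * η ^ 3 := by positivity
    linarith
  have habs : |hPM R η s r|
      = |hSel (R + s * η) r| * |hSel η r| / (Real.pi * (Real.sinh (2 * η) - 2 * η)) := by
    rw [hPM, abs_div, abs_mul, abs_of_pos hDpos]
  have hA := bound_big hR hη0 hη1 hs hr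
  have hB := bound_small hη0 hη1 hr
  have hnum : |hSel (R + s * η) r| * |hSel η r|
      ≤ (24 * Real.pi * Real.exp 1 * R * Real.exp R / (1 + |r|) ^ 2)
        * (32 * Real.pi * Real.cosh 1 * η ^ 3 / (1 + η * |r|) ^ 2) :=
    mul_le_mul hA hB (abs_nonneg _) (by positivity)
  rw [habs]
  calc |hSel (R + s * η) r| * |hSel η r| / (Real.pi * (Real.sinh (2 * η) - 2 * η))
      ≤ ((24 * Real.pi * Real.exp 1 * R * Real.exp R / (1 + |r|) ^ 2)
          * (32 * Real.pi * Real.cosh 1 * η ^ 3 / (1 + η * |r|) ^ 2))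
        / (4 * Real.pi / 3 * η ^ 3) :=
        div_le_div₀ (by positivity) hnum (by positivity) hDlow
    _ = 576 * Real.pi * Real.exp 1 * Real.cosh 1 * R * Real.exp R
        / ((1 + |r|) ^ 2 * (1 + η * |r|) ^ 2) := by
        field_simp
        ring
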